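/- Let w_1, ..., w_m be i.i.d. standard Gaussian random vectors on ℝ^d and let φ(x) = (exp(−‖x‖²/2)/√m)·(exp(⟨w_1, x⟩), ..., exp(⟨w_m, x⟩)) be the Positive Random Feature (PRF) map. Then for all x, y ∈ ℝ^d, E[⟨φ(x), φ(y)⟩] = exp(⟨x, y⟩); that is, the PRF kernel is an unbiased estimator of the exponentiated dot product. -/

import Mathlib

open MeasureTheory ProbabilityTheory

/-- The joint law of `m` i.i.d. standard Gaussian random vectors on `ℝ^d`. -/
noncomputable def iidStdGaussian (m d : ℕ) : Measure (Fin m → Fin d → ℝ) :=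
  Measure.pi fun _ => Measure.pi fun _ => gaussianReal 0 1

/-- The Positive Random Feature (PRF) map with `m` features:
`φ(x)_i = (exp (−‖x‖²/2)/√m) · exp ⟨w_i, x⟩`. -/
noncomputable def prf (m d : ℕ) (W : Fin m → Fin d → ℝ) (x : Fin d → ℝ) : Fin m → ℝ :=
  fun i => (Real.exp (-(∑ j, (x j) ^ 2) / 2) / Real.sqrt m) * Real.exp (∑ j, W i j * x j)

/-- The moment generating function of the standard Gaussian: `E[exp(tu)] = exp(t²/2)`. -/
lemma gauss_mgf (t : ℝ) :
    ∫ u, Real.exp (t * u) ∂(gaussianReal 0 1) = Real.exp (t ^ 2 / 2) := by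
  rw [gaussianReal_of_var_ne_zero 0 one_ne_zero]
  have hmeas : Measurable fun u : ℝ => (gaussianPDFReal 0 1 u).toNNReal :=
    (measurable_gaussianPDFReal 0 1).real_toNNReal
  rw [show gaussianPDF 0 1 = fun u => ((gaussianPDFReal 0 1 u).toNNReal : ENNReal) from rfl]
  rw [integral_withDensity_eq_integral_smul hmeas]
  have h1 : ∀ u : ℝ, (gaussianPDFReal 0 1 u).toNNReal • Real.exp (t * u)
      = ((Real.sqrt (2 * Real.pi))⁻¹ * Real.exp (t ^ 2 / 2)) *
        Real.exp (-(1/2) * (u - t) ^ 2) := by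
    intro u
    rw [NNReal.smul_def, Real.coe_toNNReal _ (gaussianPDFReal_nonneg 0 1 u)]
    rw [gaussianPDFReal]
    push_cast
    rw [mul_one, mul_one, sub_zero]
    rw [smul_eq_mul, mul_assoc, mul_assoc, ← Real.exp_add, ← Real.exp_add]
    congr 1
    ring
  simp_rw [h1]
  rw [MeasureTheory.integral_const_mul]
  have h2 : ∫ u : ℝ, Real.exp (-(1/2) * (u - t) ^ 2)
      = ∫ u : ℝ, Real.exp (-(1/2) * u ^ 2) :=
    MeasureTheory.integral_sub_right_eq_self (fun u : ℝ => Real.exp (-(1/2) * u ^ 2)) t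
  rw [h2, integral_gaussian]
  have h3 : Real.sqrt (Real.pi / (1/2)) = Real.sqrt (2 * Real.pi) := by
    norm_num [mul_comm]
  rw [h3, mul_comm ((Real.sqrt (2 * Real.pi))⁻¹) _, mul_assoc,
    inv_mul_cancel₀ (by positivity : Real.sqrt (2 * Real.pi) ≠ 0), mul_one]

lemma gauss_exp_integrable (t : ℝ) :
    Integrable (fun u => Real.exp (t * u)) (gaussianReal 0 1) := by
  by_contra h
  have h2 := gauss_mgf t
  rw [integral_undef h] at h2
  exact (Real.exp_pos _).ne' h2.symm

lemma integral_pi_prod {ι : Type*} [Fintype ι] {α : Type*} [MeasurableSpace α]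
    (μ : Measure α) [SigmaFinite μ] (f : ι → α → ℝ) :
    ∫ w : ι → α, ∏ i, f i (w i) ∂(Measure.pi fun _ => μ) = ∏ i, ∫ a, f i a ∂μ := by
  letI : MeasureSpace α := ⟨μ⟩
  exact MeasureTheory.integral_fintype_prod_volume_eq_prod (ι := ι) (fun i => f i)

lemma integrable_pi_prod {ι : Type*} [Fintype ι] {α : Type*} [MeasurableSpace α]
    (μ : Measure α) [SigmaFinite μ] (f : ι → α → ℝ) (hf : ∀ i, Integrable (f i) μ) :
    Integrable (fun w : ι → α => ∏ i, f i (w i)) (Measure.pi fun _ => μ) := by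
  letI : MeasureSpace α := ⟨μ⟩
  exact MeasureTheory.Integrable.fintype_prod hf

lemma eval_integrable {ι : Type*} [Fintype ι] [DecidableEq ι] {α : Type*} [MeasurableSpace α]
    (μ : Measure α) [IsProbabilityMeasure μ] (g : α → ℝ) (hg : Integrable g μ) (i : ι) :
    Integrable (fun w : ι → α => g (w i)) (Measure.pi fun _ => μ) := by
  have h : (fun w : ι → α => g (w i))
      = fun w : ι → α => ∏ i', (fun a => if i' = i then g a else 1) (w i') := by
    funext w
    simp [Finset.prod_ite_eq']
  rw [h]
  refine integrable_pi_prod μ (fun i' a => if i' = i then g a else 1) (fun i' => ?_)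
  by_cases hii : i' = i <;> simp [hii, hg]

lemma eval_integral {ι : Type*} [Fintype ι] [DecidableEq ι] {α : Type*} [MeasurableSpace α]
    (μ : Measure α) [IsProbabilityMeasure μ] (g : α → ℝ) (i : ι) :
    ∫ w : ι → α, g (w i) ∂(Measure.pi fun _ => μ) = ∫ a, g a ∂μ := by
  have h : (fun w : ι → α => g (w i))
      = fun w : ι → α => ∏ i', (fun a => if i' = i then g a else 1) (w i') := by
    funext w
    simp [Finset.prod_ite_eq']
  rw [h, integral_pi_prod μ (fun i' a => if i' = i then g a else 1)]
  have h2 : ∀ i' : ι, (∫ a, (if i' = i then g a else 1) ∂μ)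
      = if i' = i then ∫ a, g a ∂μ else 1 := by
    intro i'
    by_cases hii : i' = i <;> simp [hii]
  simp_rw [h2]
  simp [Finset.prod_ite_eq']

lemma pi_gauss_exp_eq_prod (d : ℕ) (z : Fin d → ℝ) (w : Fin d → ℝ) :
    Real.exp (∑ j, w j * z j) = ∏ j, Real.exp (z j * w j) := by
  rw [← Real.exp_sum]
  exact congrArg Real.exp (Finset.sum_congr rfl fun j _ => mul_comm _ _)

lemma pi_gauss_exp (d : ℕ) (z : Fin d → ℝ) :
    ∫ w : Fin d → ℝ, Real.exp (∑ j, w j * z j) ∂(Measure.pi fun _ => gaussianReal 0 1)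
      = Real.exp (∑ j, z j ^ 2 / 2) := by
  simp_rw [pi_gauss_exp_eq_prod]
  rw [integral_pi_prod (gaussianReal 0 1) (fun j u => Real.exp (z j * u))]
  simp_rw [gauss_mgf]
  rw [← Real.exp_sum]

lemma pi_gauss_exp_integrable (d : ℕ) (z : Fin d → ℝ) :
    Integrable (fun w : Fin d → ℝ => Real.exp (∑ j, w j * z j))
      (Measure.pi fun _ => gaussianReal 0 1) := by
  simp_rw [pi_gauss_exp_eq_prod]
  exact integrable_pi_prod _ (fun j u => Real.exp (z j * u))
    (fun j => gauss_exp_integrable (z j))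

/-- The PRF kernel is an unbiased estimator of the exponentiated dot product:
`E[⟨φ(x), φ(y)⟩] = exp ⟨x, y⟩`. -/
theorem integral_prf_inner (m d : ℕ) (hm : 0 < m) (x y : Fin d → ℝ) :
    ∫ W, (∑ i, prf m d W x i * prf m d W y i) ∂(iidStdGaussian m d)
      = Real.exp (∑ j, x j * y j) := by
  set z : Fin d → ℝ := fun j => x j + y j with hz
  set C : ℝ := (Real.exp (-(∑ j, x j ^ 2) / 2) / Real.sqrt m) *
    (Real.exp (-(∑ j, y j ^ 2) / 2) / Real.sqrt m) with hC
  have hterm : ∀ (W : Fin m → Fin d → ℝ) (i : Fin m),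
      prf m d W x i * prf m d W y i = C * Real.exp (∑ j, W i j * z j) := by
    intro W i
    have hsum : (∑ j, W i j * x j) + (∑ j, W i j * y j) = ∑ j, W i j * z j := by
      rw [← Finset.sum_add_distrib]
      exact Finset.sum_congr rfl fun j _ => by simp [hz, mul_add]
    rw [prf, prf, mul_mul_mul_comm, ← Real.exp_add, hsum, hC]
  have hμ : IsProbabilityMeasure
      (Measure.pi fun _ : Fin d => gaussianReal 0 1) := by infer_instance
  simp_rw [hterm]
  rw [iidStdGaussian]
  rw [integral_finset_sum _ (fun i _ =>
    ((eval_integrable _ _ (pi_gauss_exp_integrable d z) i).const_mul C))]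
  have hone : ∀ i : Fin m,
      ∫ W : Fin m → Fin d → ℝ, C * Real.exp (∑ j, W i j * z j)
        ∂(Measure.pi fun _ => Measure.pi fun _ => gaussianReal 0 1)
      = C * Real.exp (∑ j, z j ^ 2 / 2) := by
    intro i
    rw [MeasureTheory.integral_const_mul,
      eval_integral (Measure.pi fun _ : Fin d => gaussianReal 0 1)
        (fun w => Real.exp (∑ j, w j * z j)) i,
      pi_gauss_exp]
  simp_rw [hone]
  rw [Finset.sum_const, Finset.card_univ, Fintype.card_fin, nsmul_eq_mul]
  have hsqrt : Real.sqrt m * Real.sqrt m = (m : ℝ) :=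
    Real.mul_self_sqrt (Nat.cast_nonneg m)
  have hm' : (m : ℝ) ≠ 0 := Nat.cast_ne_zero.mpr hm.ne'
  have hCval : C = Real.exp (-(∑ j, x j ^ 2) / 2) * Real.exp (-(∑ j, y j ^ 2) / 2) / m := by
    rw [hC, div_mul_div_comm, hsqrt]
  rw [hCval]
  have hzsum : ∑ j, z j ^ 2 / 2
      = (∑ j, x j ^ 2) / 2 + (∑ j, y j ^ 2) / 2 + ∑ j, x j * y j := by
    have h4 : ∀ j : Fin d, z j ^ 2 / 2 = x j ^ 2 / 2 + y j ^ 2 / 2 + x j * y j :=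
      fun j => by simp only [hz]; ring
    rw [Finset.sum_congr rfl fun j _ => h4 j, Finset.sum_add_distrib, Finset.sum_add_distrib,
      ← Finset.sum_div, ← Finset.sum_div]
  rw [hzsum, ← Real.exp_add, div_mul_eq_mul_div, ← Real.exp_add,
    mul_comm ((m : ℝ)) _, div_mul_cancel₀ _ hm']
  congr 1
  ring
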